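/- For every integer M ≥ 0, Σ_{p=0}^{M} (2p+1)·(binom(2M, M+p) − binom(2M, M+p+1))^2 = binom(2M, M)^2. -/

import Mathlib

open Finset

/-- `Σ_{p=0}^{M} (2p+1)·(binom(2M, M+p) − binom(2M, M+p+1))^2 = binom(2M, M)^2`. -/
theorem sum_weighted_sq_ballot (M : ℕ) :
    ∑ p ∈ Finset.range (M + 1),
        (2 * (p : ℚ) + 1) *
          ((Nat.choose (2 * M) (M + p) : ℚ) - (Nat.choose (2 * M) (M + p + 1) : ℚ)) ^ 2 =
      (Nat.choose (2 * M) M : ℚ) ^ 2 := by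
  rcases Nat.eq_zero_or_pos M with hM | hM
  · subst hM; simp
  have hM0 : (M : ℚ) ≠ 0 := Nat.cast_ne_zero.mpr hM.ne'
  set f : ℕ → ℚ := fun p =>
    (2 * (p : ℚ) ^ 2 + M) / M * (Nat.choose (2 * M) (M + p) : ℚ) ^ 2 with hf
  have key : ∀ p ∈ Finset.range (M + 1),
      (2 * (p : ℚ) + 1) *
          ((Nat.choose (2 * M) (M + p) : ℚ) - (Nat.choose (2 * M) (M + p + 1) : ℚ)) ^ 2
        = f p - f (p + 1) := by
    intro p hp
    have hpM : p ≤ M := Nat.lt_succ_iff.mp (Finset.mem_range.mp hp)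
    -- ratio identity
    have hr : (Nat.choose (2 * M) (M + p + 1) : ℚ) * (M + p + 1)
        = (Nat.choose (2 * M) (M + p) : ℚ) * ((M : ℚ) - p) := by
      have h := Nat.choose_succ_right_eq (2 * M) (M + p)
      have hsub : 2 * M - (M + p) = M - p := by omega
      rw [hsub] at h
      have := congrArg (fun n : ℕ => (n : ℚ)) h
      push_cast at this
      rw [Nat.cast_sub hpM] at this
      linarith [this]
    set A : ℚ := (Nat.choose (2 * M) (M + p) : ℚ)
    set B : ℚ := (Nat.choose (2 * M) (M + p + 1) : ℚ)
    have hd : (M : ℚ) + p + 1 ≠ 0 := by positivity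
    have hB : B = A * ((M : ℚ) - p) / ((M : ℚ) + p + 1) := by
      field_simp
      linarith [hr]
    simp only [hf]
    have hcast : ((M + (p + 1) : ℕ) : ℚ) = (M : ℚ) + p + 1 := by push_cast; ring
    have hBf : (Nat.choose (2 * M) (M + (p + 1)) : ℚ) = B := by
      simp only [B]; norm_num [Nat.add_assoc]
    rw [hBf, hB]
    push_cast
    field_simp
    ring
  rw [Finset.sum_congr rfl key, Finset.sum_range_sub' f]
  have h1 : f (M + 1) = 0 := by
    have : Nat.choose (2 * M) (M + (M + 1)) = 0 := by
      apply Nat.choose_eq_zero_of_lt; omega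
    simp [hf, this]
  have h0 : f 0 = (Nat.choose (2 * M) M : ℚ) ^ 2 := by
    simp [hf]
    field_simp
  rw [h1, h0, sub_zero]
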